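/- Let v be an admissible weight function, and let 𝒯 = {T_t : t ≥ 0} be the semigroup of left translation operators on X = C_{0,v}(ℝ₊). Then 𝒯 is hypercyclic if and only if there exist f ∈ X and a > 0 such that sup{ |f(x+t)| v(x) : x ∈ [0,a] } does not converge to 0 as t → ∞. -/

import Mathlib

open MeasureTheory Filter Set
open scoped ENNReal

/-- The `L^p_v` norm of a function on `[0,∞)`:
`‖f‖ = (∫₀^∞ |f(x)|^p v(x) dx)^(1/p)`. -/
noncomputable def lpNorm (p : ℝ) (v : ℝ → ℝ) (f : ℝ → ℝ) : ℝ :=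
  (∫ x in Set.Ici (0:ℝ), |f x| ^ p * v x) ^ (1 / p)

/-- Membership in the weighted Lebesgue space `L^p_v(ℝ₊)`. -/
def MemLpW (p : ℝ) (v : ℝ → ℝ) (f : ℝ → ℝ) : Prop :=
  AEStronglyMeasurable f (volume.restrict (Set.Ici (0:ℝ))) ∧
    IntegrableOn (fun x => |f x| ^ p * v x) (Set.Ici (0:ℝ))

/-- The left translation operator `(T_t f)(x) = f (x + t)`. -/
def translateW (t : ℝ) (f : ℝ → ℝ) : ℝ → ℝ := fun x => f (x + t)

/-- `v` is an admissible weight function: strictly positive, locally integrable on `[0,∞)`,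
and there are `M ≥ 1`, `w ≥ 0` with `v x ≤ M * exp (w*t) * v (x+t)` for all `x, t ≥ 0`. -/
def AdmissibleWeight (v : ℝ → ℝ) : Prop :=
  (∀ x, 0 ≤ x → 0 < v x) ∧
  (∀ a, 0 ≤ a → IntegrableOn v (Set.Icc (0:ℝ) a)) ∧
  ∃ M, 1 ≤ M ∧ ∃ w, 0 ≤ w ∧ ∀ x, 0 ≤ x → ∀ t, 0 ≤ t →
    v x ≤ M * Real.exp (w * t) * v (x + t)

/-- The set `{ v x / v y : 0 ≤ x ≤ y }`. -/
def ratioSet (v : ℝ → ℝ) : Set ℝ := {r | ∃ x y, 0 ≤ x ∧ x ≤ y ∧ r = v x / v y}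

/-- Membership in `C_{0,v}(ℝ₊)`: continuous on `[0,∞)` with `|f x| * v x → 0` as `x → ∞`. -/
def MemC0 (v : ℝ → ℝ) (f : ℝ → ℝ) : Prop :=
  ContinuousOn f (Set.Ici (0:ℝ)) ∧
    Filter.Tendsto (fun x => |f x| * v x) Filter.atTop (nhds 0)

/-- The norm on `C_{0,v}(ℝ₊)`: `‖f‖ = sup { |f x| * v x : x ≥ 0 }`. -/
noncomputable def c0Norm (v : ℝ → ℝ) (f : ℝ → ℝ) : ℝ :=
  sSup ((fun x => |f x| * v x) '' Set.Ici (0:ℝ))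

section Helpers

open Filter Set

/-- Bundled admissible weight data. -/
structure AW (v : ℝ → ℝ) (M w : ℝ) : Prop where
  pos : ∀ x, 0 ≤ x → 0 < v x
  oneM : 1 ≤ M
  w0 : 0 ≤ w
  bnd : ∀ x, 0 ≤ x → ∀ t, 0 ≤ t → v x ≤ M * Real.exp (w * t) * v (x + t)

theorem AW.of_adm {v : ℝ → ℝ} (hv : AdmissibleWeight v) : ∃ M w, AW v M w := by
  obtain ⟨h1, _, M, hM, w, hw, hb⟩ := hv
  exact ⟨M, w, ⟨h1, hM, hw, hb⟩⟩

theorem AW.Mpos {v M w} (h : AW v M w) : (0:ℝ) < M := lt_of_lt_of_le one_pos h.oneM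

/-- The weight is bounded on `[0, A]` by `M * exp (w*A) * v A`. -/
theorem AW.v_le {v M w} (h : AW v M w) {A x : ℝ} (hx : 0 ≤ x) (hxA : x ≤ A) :
    v x ≤ M * Real.exp (w * A) * v A := by
  have hA : 0 ≤ A := hx.trans hxA
  have h1 : v x ≤ M * Real.exp (w * (A - x)) * v (x + (A - x)) :=
    h.bnd x hx (A - x) (by linarith)
  have h2 : x + (A - x) = A := by ring
  rw [h2] at h1
  refine h1.trans ?_
  have hvA : 0 < v A := h.pos A hA
  have : Real.exp (w * (A - x)) ≤ Real.exp (w * A) := by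
    apply Real.exp_le_exp.2
    have := h.w0
    nlinarith
  exact mul_le_mul_of_nonneg_right (mul_le_mul_of_nonneg_left this h.Mpos.le) hvA.le

theorem AW.vb_pos {v M w} (h : AW v M w) {A : ℝ} (hA : 0 ≤ A) :
    0 < M * Real.exp (w * A) * v A := by
  have := h.pos A hA
  have := h.Mpos
  positivity

/-- Image sets for the `c0Norm` are nonempty. -/
theorem c0_image_nonempty (v f : ℝ → ℝ) :
    ((fun x => |f x| * v x) '' Set.Ici (0:ℝ)).Nonempty :=
  ⟨|f 0| * v 0, ⟨0, Set.mem_Ici.2 (le_refl _), rfl⟩⟩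

theorem c0Norm_le {v f : ℝ → ℝ} {c : ℝ}
    (h : ∀ x, 0 ≤ x → |f x| * v x ≤ c) : c0Norm v f ≤ c := by
  apply csSup_le (c0_image_nonempty v f)
  rintro y ⟨x, hx, rfl⟩
  exact h x hx

theorem le_c0Norm {v f : ℝ → ℝ} {x : ℝ}
    (hb : BddAbove ((fun x => |f x| * v x) '' Set.Ici (0:ℝ))) (hx : 0 ≤ x) :
    |f x| * v x ≤ c0Norm v f :=
  le_csSup hb ⟨x, hx, rfl⟩

/-- Boundedness of the weighted sup for a continuous function with decay. -/
theorem bddAbove_c0_image {v : ℝ → ℝ} {M' w' : ℝ} (h : AW v M' w') {f : ℝ → ℝ}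
    (hc : ContinuousOn f (Set.Ici (0:ℝ)))
    (ht : Tendsto (fun x => |f x| * v x) atTop (nhds 0)) :
    BddAbove ((fun x => |f x| * v x) '' Set.Ici (0:ℝ)) := by
  have h1 : ∀ᶠ x in atTop, |f x| * v x < 1 := ht.eventually_lt_const one_pos
  obtain ⟨A₀, hA₀⟩ := eventually_atTop.1 h1
  set A := max A₀ 0 with hAdef
  have hA0 : 0 ≤ A := le_max_right _ _
  obtain ⟨C, hC⟩ := (isCompact_Icc (a := (0:ℝ)) (b := A)).exists_bound_of_continuousOn
    (hc.mono (Set.Icc_subset_Ici_self))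
  refine ⟨max 1 (max C 0 * (M' * Real.exp (w' * A) * v A)), ?_⟩
  rintro y ⟨x, hx, rfl⟩
  simp only [Set.mem_Ici] at hx
  rcases le_or_gt x A with hxa | hxa
  · have h2 : |f x| ≤ max C 0 := le_trans (hC x ⟨hx, hxa⟩) (le_max_left _ _)
    have h3 : v x ≤ M' * Real.exp (w' * A) * v A := h.v_le hx hxa
    have h4 : 0 < v x := h.pos x hx
    refine le_trans ?_ (le_max_right _ _)
    have : |f x| * v x ≤ max C 0 * (M' * Real.exp (w' * A) * v A) := by
      apply mul_le_mul h2 h3 h4.le (le_max_right _ _)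
    exact this
  · exact le_trans (hA₀ x (le_trans (le_max_left _ _) hxa.le)).le (le_max_left _ _)

theorem translate_continuousOn {f : ℝ → ℝ} (hc : ContinuousOn f (Set.Ici (0:ℝ)))
    {t : ℝ} (ht : 0 ≤ t) : ContinuousOn (fun x => f (x + t)) (Set.Ici (0:ℝ)) := by
  apply hc.comp ((continuous_id.add continuous_const).continuousOn)
  intro x hx
  simp only [Set.mem_Ici] at *
  simp only [Pi.add_apply, id_eq] at *
  linarith

theorem translate_tendsto {v : ℝ → ℝ} {M w : ℝ} (h : AW v M w) {f : ℝ → ℝ}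
    (ht : Tendsto (fun x => |f x| * v x) atTop (nhds 0)) {t : ℝ} (htt : 0 ≤ t) :
    Tendsto (fun x => |f (x + t)| * v x) atTop (nhds 0) := by
  have key : Tendsto (fun x => M * Real.exp (w * t) * (|f (x + t)| * v (x + t)))
      atTop (nhds 0) := by
    have h2 : Tendsto (fun x : ℝ => x + t) atTop atTop :=
      tendsto_atTop_add_const_right _ t tendsto_id
    have h3 := (ht.comp h2).const_mul (M * Real.exp (w * t))
    simpa using h3
  apply squeeze_zero' ?_ ?_ key
  · filter_upwards [eventually_ge_atTop (0:ℝ)] with x hx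
    have := h.pos x hx
    positivity
  · filter_upwards [eventually_ge_atTop (0:ℝ)] with x hx
    have h4 : v x ≤ M * Real.exp (w * t) * v (x + t) := h.bnd x hx t htt
    have h5 : (0:ℝ) ≤ |f (x + t)| := abs_nonneg _
    calc |f (x + t)| * v x ≤ |f (x + t)| * (M * Real.exp (w * t) * v (x + t)) :=
          mul_le_mul_of_nonneg_left h4 h5
      _ = M * Real.exp (w * t) * (|f (x + t)| * v (x + t)) := by ring

end Helpers

section Forward

open Filter Set

theorem bddAbove_Icc_image {v : ℝ → ℝ} {M w : ℝ} (h : AW v M w) {f : ℝ → ℝ}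
    (hc : ContinuousOn f (Set.Ici (0:ℝ))) {t a : ℝ} (ht : 0 ≤ t) (ha : 0 ≤ a) :
    BddAbove ((fun x => |f (x + t)| * v x) '' Set.Icc (0:ℝ) a) := by
  obtain ⟨C, hC⟩ := (isCompact_Icc (a := (0:ℝ)) (b := a)).exists_bound_of_continuousOn
    ((translate_continuousOn hc ht).mono Set.Icc_subset_Ici_self)
  refine ⟨max C 0 * (M * Real.exp (w * a) * v a), ?_⟩
  rintro y ⟨x, hx, rfl⟩
  have h1 : |f (x + t)| ≤ max C 0 := le_trans (le_of_eq (Real.norm_eq_abs _).symm)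
    (le_trans (hC x hx) (le_max_left _ _))
  have h2 : v x ≤ M * Real.exp (w * a) * v a := h.v_le hx.1 hx.2
  have h3 : 0 < v x := h.pos x hx.1
  exact mul_le_mul h1 h2 h3.le (le_max_right _ _)

theorem diff_c0 {v : ℝ → ℝ} {M w : ℝ} (h : AW v M w) {f g : ℝ → ℝ}
    (hf : MemC0 v f) (hg : MemC0 v g) {t : ℝ} (ht : 0 ≤ t) :
    ContinuousOn (translateW t f - g) (Set.Ici (0:ℝ)) ∧
      Tendsto (fun x => |(translateW t f - g) x| * v x) atTop (nhds 0) := by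
  constructor
  · exact ContinuousOn.sub (translate_continuousOn hf.1 ht) hg.1
  · have key : Tendsto (fun x => |f (x + t)| * v x + |g x| * v x) atTop (nhds 0) := by
      have := (translate_tendsto h hf.2 ht).add hg.2
      simpa using this
    apply squeeze_zero' ?_ ?_ key
    · filter_upwards [eventually_ge_atTop (0:ℝ)] with x hx
      have := h.pos x hx
      positivity
    · filter_upwards [eventually_ge_atTop (0:ℝ)] with x hx
      have h4 : 0 ≤ v x := (h.pos x hx).le
      have h5 : |(translateW t f - g) x| ≤ |f (x + t)| + |g x| := by
        simp only [Pi.sub_apply, translateW]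
        exact abs_sub _ _
      nlinarith [abs_nonneg (f (x+t)), abs_nonneg (g x)]

theorem forward_dir {v : ℝ → ℝ} {M w : ℝ} (h : AW v M w) {f : ℝ → ℝ} (hf : MemC0 v f)
    (hyp : ∀ g, MemC0 v g → ∀ ε > (0:ℝ), ∃ t, 0 ≤ t ∧ c0Norm v (translateW t f - g) < ε) :
    ¬ Filter.Tendsto
        (fun t => sSup ((fun x => |f (x + t)| * v x) '' Set.Icc (0:ℝ) 1))
        Filter.atTop (nhds 0) := by
  intro hT
  set S : ℝ → ℝ := fun t => sSup ((fun x => |f (x + t)| * v x) '' Set.Icc (0:ℝ) 1) with hSdef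
  have hv0 : 0 < v 0 := h.pos 0 le_rfl
  have hS0 : ∀ t, 0 ≤ t → |f t| * v 0 ≤ S t := by
    intro t ht
    have hb := bddAbove_Icc_image h hf.1 ht zero_le_one
    have : |f (0 + t)| * v 0 ≤ S t := le_csSup hb ⟨0, ⟨le_rfl, zero_le_one⟩, rfl⟩
    simpa using this
  obtain ⟨T₀', hT₀'⟩ := eventually_atTop.1 (hT.eventually_lt_const one_pos)
  set T₀ : ℝ := max T₀' 0 with hT₀def
  obtain ⟨C, hC⟩ := (isCompact_Icc (a := (0:ℝ)) (b := T₀)).exists_bound_of_continuousOn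
    (hf.1.mono Set.Icc_subset_Ici_self)
  set B : ℝ := max C 0 with hBdef
  have hB0 : 0 ≤ B := le_max_right _ _
  set g : ℝ → ℝ := fun x => ((B * v 0 + 2) / v 0) * max (1 - x) 0 with hgdef
  have hgmem : MemC0 v g := by
    constructor
    · apply Continuous.continuousOn
      exact continuous_const.mul ((continuous_const.sub continuous_id).max continuous_const)
    · have : ∀ᶠ x in atTop, |g x| * v x = 0 := by
        filter_upwards [eventually_ge_atTop (1:ℝ)] with x hx
        have : max (1 - x) 0 = 0 := max_eq_right (by linarith)
        simp [hgdef, this]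
      exact Tendsto.congr' (by filter_upwards [this] with x hx using hx.symm)
        tendsto_const_nhds
  obtain ⟨t, ht0, hlt⟩ := hyp g hgmem (1/2) (by norm_num)
  have hd := diff_c0 h hf hgmem ht0
  have hb := bddAbove_c0_image h hd.1 hd.2
  have h1 : |(translateW t f - g) 0| * v 0 ≤ c0Norm v (translateW t f - g) :=
    le_c0Norm hb le_rfl
  have h2 : |f t - g 0| * v 0 < 1/2 := by
    have : (translateW t f - g) 0 = f t - g 0 := by
      simp [translateW, Pi.sub_apply]
    rw [this] at h1
    linarith
  have hg0 : g 0 * v 0 = B * v 0 + 2 := by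
    have : max (1 - (0:ℝ)) 0 = 1 := by norm_num
    show (B * v 0 + 2) / v 0 * max (1 - (0:ℝ)) 0 * v 0 = B * v 0 + 2
    rw [this, mul_one, div_mul_cancel₀ _ hv0.ne']
  have hg0nn : 0 ≤ g 0 := by
    have h3 : (0:ℝ) ≤ (B * v 0 + 2) / v 0 := by positivity
    have h4 : (0:ℝ) ≤ max (1 - (0:ℝ)) 0 := le_max_right _ _
    exact mul_nonneg h3 h4
  have htri : |g 0| - |f t| ≤ |f t - g 0| := by
    have := abs_sub_abs_le_abs_sub (g 0) (f t)
    rw [abs_sub_comm] at this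
    linarith
  have hft : B * v 0 + 3/2 < |f t| * v 0 := by
    have h5 : (|g 0| - |f t|) * v 0 ≤ |f t - g 0| * v 0 :=
      mul_le_mul_of_nonneg_right htri hv0.le
    have h6 : |g 0| = g 0 := abs_of_nonneg hg0nn
    nlinarith
  rcases le_or_gt t T₀ with hcase | hcase
  · have h7 : |f t| ≤ B := le_trans (le_of_eq (Real.norm_eq_abs _).symm)
      (le_trans (hC t ⟨ht0, hcase⟩) (le_max_left _ _))
    nlinarith
  · have h8 : S t < 1 := hT₀' t (le_trans (le_max_left _ _) hcase.le)
    have h9 := hS0 t ht0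
    nlinarith
end Forward

section SmallPoints

open Filter Set

theorem small_points {v : ℝ → ℝ} {M w : ℝ} (h : AW v M w) {f0 : ℝ → ℝ}
    (hf0 : MemC0 v f0) {a : ℝ} (ha : 0 < a)
    (hnt : ¬ Filter.Tendsto
      (fun t => sSup ((fun x => |f0 (x + t)| * v x) '' Set.Icc (0:ℝ) a))
      Filter.atTop (nhds 0)) :
    ∀ η : ℝ, 0 < η → ∀ T : ℝ, ∃ s, T ≤ s ∧ v s < η := by
  set S : ℝ → ℝ := fun t => sSup ((fun x => |f0 (x + t)| * v x) '' Set.Icc (0:ℝ) a)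
    with hSdef
  have hS0 : ∀ t, 0 ≤ t → 0 ≤ S t := by
    intro t ht
    have hb := bddAbove_Icc_image h hf0.1 ht ha.le
    have h1 : |f0 (0 + t)| * v 0 ≤ S t := le_csSup hb ⟨0, ⟨le_rfl, ha.le⟩, rfl⟩
    have h2 : 0 ≤ |f0 (0 + t)| * v 0 := mul_nonneg (abs_nonneg _) (h.pos 0 le_rfl).le
    linarith
  rw [Metric.tendsto_atTop] at hnt
  push_neg at hnt
  obtain ⟨ε, hε, hfreq⟩ := hnt
  intro η hη T
  set VB : ℝ := M * Real.exp (w * a) * v a with hVBdef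
  have hVB : 0 < VB := h.vb_pos ha.le
  set δ : ℝ := ε / 2 * η / (VB + 1) with hδdef
  have hδ : 0 < δ := by positivity
  obtain ⟨A, hA⟩ := eventually_atTop.1 (hf0.2.eventually_lt_const hδ)
  obtain ⟨t, htge, hdist⟩ := hfreq (max (max T A) 0)
  have ht0 : 0 ≤ t := le_trans (le_max_right _ _) htge
  have htT : T ≤ t := le_trans (le_trans (le_max_left _ _) (le_max_left _ _)) htge
  have htA : A ≤ t := le_trans (le_trans (le_max_right _ _) (le_max_left _ _)) htge
  have hSt : ε ≤ S t := by
    rw [Real.dist_eq, sub_zero, abs_of_nonneg (hS0 t ht0)] at hdist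
    exact hdist
  have hne : ((fun x => |f0 (x + t)| * v x) '' Set.Icc (0:ℝ) a).Nonempty :=
    ⟨|f0 (0 + t)| * v 0, ⟨0, ⟨le_rfl, ha.le⟩, rfl⟩⟩
  obtain ⟨y, ⟨x, hx, rfl⟩, hbig⟩ := exists_lt_of_lt_csSup hne
    (lt_of_lt_of_le (by linarith : ε / 2 < ε) hSt)
  have hx0 : 0 ≤ x := hx.1
  have hvx : v x ≤ VB := h.v_le hx0 hx.2
  have hvxpos : 0 < v x := h.pos x hx0
  have hxt0 : 0 ≤ x + t := by linarith
  have hvxt : 0 < v (x + t) := h.pos _ hxt0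
  have hsmall : |f0 (x + t)| * v (x + t) < δ := hA (x + t) (by linarith)
  refine ⟨x + t, by linarith, ?_⟩
  have e1 : v (x + t) * (ε / 2) < v (x + t) * (|f0 (x + t)| * v x) :=
    mul_lt_mul_of_pos_left hbig hvxt
  have e3 : |f0 (x + t)| * v (x + t) * v x ≤ δ * VB :=
    mul_le_mul hsmall.le hvx hvxpos.le hδ.le
  have e4 : δ * VB < ε / 2 * η := by
    rw [hδdef, div_mul_eq_mul_div, div_lt_iff₀ (by positivity)]
    nlinarith
  have e5 : v (x + t) * (ε / 2) < η * (ε / 2) := by nlinarith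
  exact lt_of_mul_lt_mul_right (by linarith [e5]) (by linarith : (0:ℝ) ≤ ε / 2)

end SmallPoints

section DenseFamily

open Filter Set

noncomputable def cutFn (n : ℕ) : ℝ → ℝ := fun x => max 0 (min ((n:ℝ) + 1 - x) 1)

theorem cutFn_cont (n : ℕ) : Continuous (cutFn n) :=
  continuous_const.max ((continuous_const.sub continuous_id).min continuous_const)

theorem cutFn_nonneg (n : ℕ) (x : ℝ) : 0 ≤ cutFn n x := le_max_left _ _

theorem cutFn_le_one (n : ℕ) (x : ℝ) : cutFn n x ≤ 1 :=
  max_le (by norm_num) (min_le_right _ _)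

theorem cutFn_eq_one {n : ℕ} {x : ℝ} (hx : x ≤ (n:ℝ)) : cutFn n x = 1 := by
  have h1 : min ((n:ℝ) + 1 - x) 1 = 1 := min_eq_right (by linarith)
  simp [cutFn, h1]

theorem cutFn_eq_zero {n : ℕ} {x : ℝ} (hx : (n:ℝ) + 1 ≤ x) : cutFn n x = 0 := by
  have h1 : min ((n:ℝ) + 1 - x) 1 ≤ 0 := le_trans (min_le_left _ _) (by linarith)
  exact max_eq_left h1

theorem Icc_nplus1_le (n : ℕ) : (0:ℝ) ≤ (n:ℝ) + 1 := by positivity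

noncomputable def denseU (n : ℕ) : ℕ → C(↥(Set.Icc (0:ℝ) ((n:ℝ)+1)), ℝ) :=
  TopologicalSpace.denseSeq _

theorem denseU_dense (n : ℕ) : DenseRange (denseU n) :=
  TopologicalSpace.denseRange_denseSeq _

noncomputable def dFun (n : ℕ) (u : C(↥(Set.Icc (0:ℝ) ((n:ℝ)+1)), ℝ)) : ℝ → ℝ :=
  fun x => Set.IccExtend (Icc_nplus1_le n) u x * cutFn n x

/-- first index of the enumeration -/
def idx1 (k : ℕ) : ℕ := (Nat.unpair (Nat.unpair k).2).1
def idx2 (k : ℕ) : ℕ := (Nat.unpair (Nat.unpair k).2).2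

noncomputable def gseq (k : ℕ) : ℝ → ℝ := dFun (idx1 k) (denseU (idx1 k) (idx2 k))
noncomputable def Nseq (k : ℕ) : ℝ := ((idx1 k : ℝ)) + 1
noncomputable def Bseq (k : ℕ) : ℝ := ‖denseU (idx1 k) (idx2 k)‖

theorem gseq_cont (k : ℕ) : Continuous (gseq k) :=
  (Continuous.Icc_extend' (map_continuous _)).mul (cutFn_cont _)

theorem Nseq_nonneg (k : ℕ) : 0 ≤ Nseq k := by
  have : (0:ℝ) ≤ (idx1 k : ℝ) := Nat.cast_nonneg _
  simp only [Nseq]; linarith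

theorem Bseq_nonneg (k : ℕ) : 0 ≤ Bseq k := norm_nonneg _

theorem gseq_zero (k : ℕ) {y : ℝ} (hy : Nseq k ≤ y) : gseq k y = 0 := by
  have : cutFn (idx1 k) y = 0 := cutFn_eq_zero (by simpa [Nseq] using hy)
  simp [gseq, dFun, this]

theorem abs_IccExtend_le (n : ℕ) (u : C(↥(Set.Icc (0:ℝ) ((n:ℝ)+1)), ℝ)) (x : ℝ) :
    |Set.IccExtend (Icc_nplus1_le n) u x| ≤ ‖u‖ := by
  have h1 : Set.IccExtend (Icc_nplus1_le n) (⇑u) x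
      = u (Set.projIcc 0 ((n:ℝ)+1) (Icc_nplus1_le n) x) := rfl
  rw [h1, ← Real.norm_eq_abs]
  exact ContinuousMap.norm_coe_le_norm u _

theorem gseq_bound (k : ℕ) (y : ℝ) : |gseq k y| ≤ Bseq k := by
  have h1 : |gseq k y| = |Set.IccExtend (Icc_nplus1_le (idx1 k)) (denseU (idx1 k) (idx2 k)) y|
      * |cutFn (idx1 k) y| := by
    simp [gseq, dFun, abs_mul]
  rw [h1]
  have h2 := abs_IccExtend_le (idx1 k) (denseU (idx1 k) (idx2 k)) y
  have h3 : |cutFn (idx1 k) y| ≤ 1 := by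
    rw [abs_of_nonneg (cutFn_nonneg _ _)]; exact cutFn_le_one _ _
  calc |Set.IccExtend (Icc_nplus1_le (idx1 k)) (denseU (idx1 k) (idx2 k)) y|
        * |cutFn (idx1 k) y| ≤ Bseq k * 1 :=
        mul_le_mul h2 h3 (abs_nonneg _) (Bseq_nonneg k)
    _ = Bseq k := mul_one _

theorem gseq_dense {v : ℝ → ℝ} {M w : ℝ} (h : AW v M w) {g : ℝ → ℝ} (hg : MemC0 v g) :
    ∀ ε : ℝ, 0 < ε → ∀ K : ℕ, ∃ k, K ≤ k ∧ c0Norm v (gseq k - g) < ε := by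
  intro ε hε K
  obtain ⟨A, hA⟩ := eventually_atTop.1 (hg.2.eventually_lt_const (by positivity : (0:ℝ) < ε/4))
  set n : ℕ := ⌈max A 0⌉₊ with hndef
  have hnA : A ≤ (n:ℝ) := le_trans (le_max_left _ _) (Nat.le_ceil _)
  have hgsmall : ∀ x : ℝ, (n:ℝ) ≤ x → |g x| * v x < ε/4 := fun x hx => hA x (by linarith)
  set C : ℝ := M * Real.exp (w * ((n:ℝ)+1)) * v ((n:ℝ)+1) with hCdef
  have hCpos : 0 < C := h.vb_pos (Icc_nplus1_le n)
  have hvC : ∀ x : ℝ, 0 ≤ x → x ≤ (n:ℝ)+1 → v x ≤ C := fun x h1 h2 => h.v_le h1 h2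
  set δ : ℝ := ε / (4 * (C+1)) with hδdef
  have hδpos : 0 < δ := by positivity
  set g0 : C(↥(Set.Icc (0:ℝ) ((n:ℝ)+1)), ℝ) :=
    ⟨(Set.Icc (0:ℝ) ((n:ℝ)+1)).restrict g,
      (hg.1.mono (Set.Icc_subset_Ici_self)).restrict⟩ with hg0def
  obtain ⟨j, hj⟩ := (denseU_dense n).exists_dist_lt g0 hδpos
  refine ⟨Nat.pair K (Nat.pair n j), Nat.left_le_pair _ _, ?_⟩
  have hidx1 : idx1 (Nat.pair K (Nat.pair n j)) = n := by simp [idx1, Nat.unpair_pair]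
  have hidx2 : idx2 (Nat.pair K (Nat.pair n j)) = j := by simp [idx2, Nat.unpair_pair]
  set u := denseU n j with hudef
  have hgseq : gseq (Nat.pair K (Nat.pair n j)) = dFun n u := by
    rw [gseq]; rw [hidx1, hidx2]
  have key : ∀ x : ℝ, 0 ≤ x → |(gseq (Nat.pair K (Nat.pair n j)) - g) x| * v x
      ≤ δ * C + ε/4 := by
    intro x hx0
    rw [hgseq]
    have hdiff : (dFun n u - g) x = Set.IccExtend (Icc_nplus1_le n) u x * cutFn n x - g x := by
      simp [dFun, Pi.sub_apply]
    rw [hdiff]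
    have hvpos : 0 < v x := h.pos x hx0
    rcases le_or_gt x ((n:ℝ)+1) with hle | hgt
    · have hxmem : x ∈ Set.Icc (0:ℝ) ((n:ℝ)+1) := ⟨hx0, hle⟩
      have hEx : Set.IccExtend (Icc_nplus1_le n) (⇑u) x = u ⟨x, hxmem⟩ :=
        Set.IccExtend_of_mem _ _ hxmem
      have hud : |u ⟨x, hxmem⟩ - g x| ≤ δ := by
        have h1 : dist (u ⟨x, hxmem⟩) (g0 ⟨x, hxmem⟩) ≤ dist u g0 :=
          ContinuousMap.dist_apply_le_dist _
        have h2 : g0 ⟨x, hxmem⟩ = g x := rfl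
        have h3 : dist u g0 = dist g0 u := dist_comm _ _
        rw [Real.dist_eq, h2] at h1
        linarith
      have hvxC : v x ≤ C := hvC x hx0 hle
      set c := cutFn n x with hcdef
      have hc0 : 0 ≤ c := cutFn_nonneg _ _
      have hc1 : c ≤ 1 := cutFn_le_one _ _
      have heq : Set.IccExtend (Icc_nplus1_le n) (⇑u) x * c - g x
          = (u ⟨x, hxmem⟩ - g x) * c + g x * (c - 1) := by rw [hEx]; ring
      have habs : |Set.IccExtend (Icc_nplus1_le n) (⇑u) x * c - g x|
          ≤ |u ⟨x, hxmem⟩ - g x| * c + |g x| * (1 - c) := by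
        rw [heq]
        refine le_trans (abs_add_le _ _) ?_
        rw [abs_mul, abs_mul]
        have : |c| = c := abs_of_nonneg hc0
        have h2 : |c - 1| = 1 - c := by rw [abs_of_nonpos (by linarith)]; ring
        rw [this, h2]
      rcases le_or_gt x (n:ℝ) with hxn | hxn
      · have hcone : c = 1 := cutFn_eq_one hxn
        have hub : |u ⟨x, hxmem⟩ - g x| * c + |g x| * (1 - c) ≤ δ := by
          rw [hcone]; simpa using hud
        have : |Set.IccExtend (Icc_nplus1_le n) (⇑u) x * c - g x| * v x ≤ δ * C :=
          mul_le_mul (le_trans habs hub) hvxC hvpos.le hδpos.le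
        nlinarith
      · have hg4 : |g x| * v x < ε/4 := hgsmall x hxn.le
        have e1 : |Set.IccExtend (Icc_nplus1_le n) (⇑u) x * c - g x| * v x
            ≤ (|u ⟨x, hxmem⟩ - g x| * c + |g x| * (1 - c)) * v x :=
          mul_le_mul_of_nonneg_right habs hvpos.le
        have e2 : (|u ⟨x, hxmem⟩ - g x| * c) * v x ≤ δ * C := by
          have : |u ⟨x, hxmem⟩ - g x| * c ≤ δ :=
            le_trans (mul_le_mul_of_nonneg_left hc1 (abs_nonneg _)) (by simpa using hud)
          exact mul_le_mul this hvxC hvpos.le hδpos.le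
        have e3 : (|g x| * (1 - c)) * v x ≤ ε/4 := by
          have h5 : (|g x| * (1 - c)) * v x = (|g x| * v x) * (1 - c) := by ring
          rw [h5]
          calc (|g x| * v x) * (1 - c) ≤ (ε/4) * 1 := by
                apply mul_le_mul hg4.le (by linarith) (by linarith)
                positivity
            _ = ε/4 := mul_one _
        nlinarith
    · have hczero : cutFn n x = 0 := cutFn_eq_zero hgt.le
      rw [hczero]
      simp only [mul_zero, zero_sub, abs_neg]
      have := hgsmall x (by linarith)
      have hδC : 0 ≤ δ * C := by positivity
      linarith
  refine lt_of_le_of_lt (c0Norm_le key) ?_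
  have hδC4 : δ * C ≤ ε/4 := by
    rw [hδdef, div_mul_eq_mul_div, div_le_iff₀ (by positivity)]
    nlinarith
  linarith

end DenseFamily

section Construction

open Filter Set Finset

/-- ramp function: 0 for `z ≤ -1`, 1 for `z ≥ 0`. -/
noncomputable def rampF (z : ℝ) : ℝ := max 0 (min (z + 1) 1)

theorem rampF_cont : Continuous rampF :=
  continuous_const.max ((continuous_id.add continuous_const).min continuous_const)

theorem rampF_nonneg (z : ℝ) : 0 ≤ rampF z := le_max_left _ _
theorem rampF_le_one (z : ℝ) : rampF z ≤ 1 := max_le zero_le_one (min_le_right _ _)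
theorem rampF_eq_zero {z : ℝ} (hz : z ≤ -1) : rampF z = 0 :=
  max_eq_left (le_trans (min_le_left _ _) (by linarith))
theorem rampF_eq_one {z : ℝ} (hz : 0 ≤ z) : rampF z = 1 := by
  have : min (z + 1) 1 = 1 := min_eq_right (by linarith)
  simp [rampF, this]

noncomputable def etaF (M w : ℝ) (N B : ℕ → ℝ) (k : ℕ) (p : ℝ) : ℝ :=
  (1/2)^k / ((|B k| + 1) * (|M| + 1) * Real.exp (w * (p + 1 + N k)))

theorem etaF_pos (M w : ℝ) (N B : ℕ → ℝ) (k : ℕ) (p : ℝ) : 0 < etaF M w N B k p := by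
  unfold etaF; positivity

variable (v : ℝ → ℝ) (M w : ℝ) (N B : ℕ → ℝ) (g : ℕ → ℝ → ℝ)
variable (hA : ∀ η : ℝ, 0 < η → ∀ T : ℝ, ∃ s, T ≤ s ∧ v s < η)

noncomputable def tauSeq : ℕ → ℝ
  | 0 => Classical.choose (hA (etaF M w N B 0 0) (etaF_pos M w N B 0 0) (N 0 + 2)) - N 0
  | (k+1) =>
      Classical.choose (hA (etaF M w N B (k+1) (tauSeq k))
        (etaF_pos M w N B (k+1) _)
        (tauSeq k + N k + N (k+1) + ((k:ℝ)+3))) - N (k+1)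

noncomputable def prevTau : ℕ → ℝ
  | 0 => 0
  | (k+1) => tauSeq v M w N B hA k

theorem tau_spec0 :
    N 0 + 2 ≤ tauSeq v M w N B hA 0 + N 0 ∧
      v (tauSeq v M w N B hA 0 + N 0) < etaF M w N B 0 0 := by
  have h := Classical.choose_spec (hA (etaF M w N B 0 0) (etaF_pos M w N B 0 0) (N 0 + 2))
  constructor
  · rw [tauSeq, sub_add_cancel]; exact h.1
  · rw [tauSeq, sub_add_cancel]; exact h.2

theorem tau_specS (k : ℕ) :
    tauSeq v M w N B hA k + N k + N (k+1) + ((k:ℝ)+3)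
        ≤ tauSeq v M w N B hA (k+1) + N (k+1) ∧
      v (tauSeq v M w N B hA (k+1) + N (k+1))
        < etaF M w N B (k+1) (tauSeq v M w N B hA k) := by
  have h := Classical.choose_spec (hA (etaF M w N B (k+1) (tauSeq v M w N B hA k))
    (etaF_pos M w N B (k+1) _) (tauSeq v M w N B hA k + N k + N (k+1) + ((k:ℝ)+3)))
  constructor
  · rw [show tauSeq v M w N B hA (k+1)
        = Classical.choose (hA (etaF M w N B (k+1) (tauSeq v M w N B hA k))
            (etaF_pos M w N B (k+1) _)
            (tauSeq v M w N B hA k + N k + N (k+1) + ((k:ℝ)+3))) - N (k+1) from rfl,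
      sub_add_cancel]
    exact h.1
  · rw [show tauSeq v M w N B hA (k+1)
        = Classical.choose (hA (etaF M w N B (k+1) (tauSeq v M w N B hA k))
            (etaF_pos M w N B (k+1) _)
            (tauSeq v M w N B hA k + N k + N (k+1) + ((k:ℝ)+3))) - N (k+1) from rfl,
      sub_add_cancel]
    exact h.2

variable (hN : ∀ k, 0 ≤ N k)

include hN in
theorem tau_ge (k : ℕ) : (k:ℝ) + 2 ≤ tauSeq v M w N B hA k := by
  induction k with
  | zero =>
      have h := (tau_spec0 v M w N B hA).1
      have := hN 0
      push_cast
      linarith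
  | succ k ih =>
      have h := (tau_specS v M w N B hA k).1
      have h1 := hN k
      have h2 := hN (k+1)
      push_cast
      push_cast at ih
      linarith

include hN in
theorem tau_pos (k : ℕ) : 0 ≤ tauSeq v M w N B hA k := by
  have h1 := tau_ge v M w N B hA hN k
  have h2 : (0:ℝ) ≤ (k:ℝ) := Nat.cast_nonneg _
  linarith

theorem tau_step (k : ℕ) :
    tauSeq v M w N B hA k + N k + 2 ≤ tauSeq v M w N B hA (k+1) := by
  have h := (tau_specS v M w N B hA k).1
  have : (0:ℝ) ≤ (k:ℝ) := Nat.cast_nonneg _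
  linarith

include hN in
theorem tau_mono : Monotone (tauSeq v M w N B hA) := by
  apply monotone_nat_of_le_succ
  intro k
  have h1 := tau_step v M w N B hA k
  have h2 := hN k
  linarith

include hN in
theorem tau_chain {m k : ℕ} (hmk : m < k) :
    tauSeq v M w N B hA m + N m + 2 ≤ tauSeq v M w N B hA k := by
  have h1 := tau_step v M w N B hA m
  have h2 : tauSeq v M w N B hA (m+1) ≤ tauSeq v M w N B hA k :=
    tau_mono v M w N B hA hN (by omega)
  linarith

include hN in
theorem prevTau_nonneg (k : ℕ) : 0 ≤ prevTau v M w N B hA k := by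
  cases k with
  | zero => simp [prevTau]
  | succ k => exact tau_pos v M w N B hA hN k

include hN in
theorem prevTau_le (k : ℕ) : prevTau v M w N B hA k ≤ tauSeq v M w N B hA k := by
  cases k with
  | zero =>
      simp only [prevTau]
      exact tau_pos v M w N B hA hN 0
  | succ k =>
      simp only [prevTau]
      exact tau_mono v M w N B hA hN (Nat.le_succ k)

theorem tau_anchor (k : ℕ) :
    v (tauSeq v M w N B hA k + N k) < etaF M w N B k (prevTau v M w N B hA k) := by
  cases k with
  | zero => exact (tau_spec0 v M w N B hA).2
  | succ k => exact (tau_specS v M w N B hA k).2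

variable (hB : ∀ k, 0 ≤ B k)

include hN hB in
theorem vx_small (h : AW v M w) (k : ℕ) {x : ℝ} (hx0 : 0 ≤ x)
    (h1 : tauSeq v M w N B hA k - 1 - prevTau v M w N B hA k ≤ x)
    (h2 : x ≤ tauSeq v M w N B hA k + N k) :
    v x ≤ (1/2)^k / (B k + 1) := by
  set τ := tauSeq v M w N B hA k with hτdef
  set p := prevTau v M w N B hA k with hpdef
  have hp0 : 0 ≤ p := prevTau_nonneg v M w N B hA hN k
  have hτ0 : 0 ≤ τ := tau_pos v M w N B hA hN k
  have hanch0 : 0 ≤ τ + N k := by linarith [hN k]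
  have e0 : v x ≤ M * Real.exp (w * ((τ + N k) - x)) * v (x + ((τ + N k) - x)) :=
    h.bnd x hx0 _ (by linarith)
  rw [show x + ((τ + N k) - x) = τ + N k from by ring] at e0
  set E := Real.exp (w * (p + 1 + N k)) with hEdef
  have e1 : Real.exp (w * ((τ + N k) - x)) ≤ E := by
    apply Real.exp_le_exp.2
    apply mul_le_mul_of_nonneg_left _ h.w0
    linarith
  have hvanch : 0 < v (τ + N k) := h.pos _ hanch0
  have e2 : v x ≤ M * E * v (τ + N k) := by
    refine le_trans e0 ?_
    exact mul_le_mul_of_nonneg_right (mul_le_mul_of_nonneg_left e1 h.Mpos.le) hvanch.le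
  have e3 : v (τ + N k) < etaF M w N B k p := tau_anchor v M w N B hA k
  have e4 : v x ≤ M * E * etaF M w N B k p := by
    refine le_trans e2 ?_
    have hME : 0 < M * E := mul_pos h.Mpos (Real.exp_pos _)
    nlinarith [etaF_pos M w N B k p]
  refine le_trans e4 ?_
  rw [etaF]
  have hBk : |B k| = B k := abs_of_nonneg (hB k)
  rw [hBk]
  have hq : (0:ℝ) < (1/2)^k := by positivity
  have hE : (0:ℝ) < E := Real.exp_pos _
  have hBk1 : (0:ℝ) < B k + 1 := by linarith [hB k]
  have hM1 : (0:ℝ) < |M| + 1 := by positivity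
  rw [← hEdef, le_div_iff₀ hBk1]
  have hMle : M ≤ |M| + 1 := by linarith [le_abs_self M]
  have key : M * E ≤ (|M| + 1) * E := mul_le_mul_of_nonneg_right hMle hE.le
  calc M * E * ((1/2)^k / ((B k + 1) * (|M| + 1) * E)) * (B k + 1)
      = (M * E) * ((1/2)^k * (B k + 1) / ((B k + 1) * (|M| + 1) * E)) := by ring
    _ ≤ ((|M| + 1) * E) * ((1/2)^k * (B k + 1) / ((B k + 1) * (|M| + 1) * E)) := by
        apply mul_le_mul_of_nonneg_right key
        positivity
    _ = (1/2)^k := by field_simp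

/-- The bump at stage `k`. -/
noncomputable def bF (k : ℕ) (x : ℝ) : ℝ :=
  rampF (x - tauSeq v M w N B hA k) * g k (x - tauSeq v M w N B hA k)

theorem bF_cont (hgc : ∀ k, Continuous (g k)) (k : ℕ) : Continuous (bF v M w N B g hA k) :=
  (rampF_cont.comp (continuous_id.sub continuous_const)).mul
    ((hgc k).comp (continuous_id.sub continuous_const))

theorem bF_zero_left {k : ℕ} {x : ℝ} (hx : x ≤ tauSeq v M w N B hA k - 1) :
    bF v M w N B g hA k x = 0 := by
  have : rampF (x - tauSeq v M w N B hA k) = 0 := rampF_eq_zero (by linarith)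
  simp [bF, this]

theorem bF_zero_right (hgz : ∀ k y, N k ≤ y → g k y = 0) {k : ℕ} {x : ℝ}
    (hx : tauSeq v M w N B hA k + N k ≤ x) : bF v M w N B g hA k x = 0 := by
  have : g k (x - tauSeq v M w N B hA k) = 0 := hgz k _ (by linarith)
  simp [bF, this]

theorem bF_eq {k : ℕ} {x : ℝ} (hx : tauSeq v M w N B hA k ≤ x) :
    bF v M w N B g hA k x = g k (x - tauSeq v M w N B hA k) := by
  have : rampF (x - tauSeq v M w N B hA k) = 1 := rampF_eq_one (by linarith)
  simp [bF, this]

theorem bF_abs (hgb : ∀ k y, |g k y| ≤ B k) (k : ℕ) (x : ℝ) :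
    |bF v M w N B g hA k x| ≤ B k := by
  rw [bF, abs_mul]
  have h1 : |rampF (x - tauSeq v M w N B hA k)| ≤ 1 := by
    rw [abs_of_nonneg (rampF_nonneg _)]; exact rampF_le_one _
  have h2 := hgb k (x - tauSeq v M w N B hA k)
  have h3 : (0:ℝ) ≤ B k := le_trans (abs_nonneg _) h2
  nlinarith [abs_nonneg (rampF (x - tauSeq v M w N B hA k)),
    abs_nonneg (g k (x - tauSeq v M w N B hA k))]

theorem bF_supp {k : ℕ} {x : ℝ} (hgz : ∀ k y, N k ≤ y → g k y = 0)
    (hx : bF v M w N B g hA k x ≠ 0) :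
    tauSeq v M w N B hA k - 1 < x ∧ x < tauSeq v M w N B hA k + N k := by
  constructor
  · by_contra hc
    exact hx (bF_zero_left v M w N B g hA (by linarith))
  · by_contra hc
    exact hx (bF_zero_right v M w N B g hA hgz (by linarith))

include hN hB in
theorem term_bound (h : AW v M w) (hgz : ∀ k y, N k ≤ y → g k y = 0)
    (hgb : ∀ k y, |g k y| ≤ B k) (m : ℕ) {x s : ℝ} (hx0 : 0 ≤ x) (hs0 : 0 ≤ s)
    (hsle : s ≤ prevTau v M w N B hA m) :
    |bF v M w N B g hA m (x + s)| * v x ≤ (1/2)^m := by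
  by_cases hz : bF v M w N B g hA m (x + s) = 0
  · rw [hz]
    simp only [abs_zero, zero_mul]
    positivity
  · obtain ⟨hl, hr⟩ := bF_supp v M w N B g hA hgz hz
    have hvx : v x ≤ (1/2)^m / (B m + 1) := by
      apply vx_small v M w N B hA hN hB h m hx0
      · linarith
      · linarith
    have hb := bF_abs v M w N B g hA hgb m (x + s)
    have hB0 := hB m
    have hvpos : 0 < v x := h.pos x hx0
    have step : |bF v M w N B g hA m (x + s)| * v x ≤ B m * ((1/2)^m / (B m + 1)) :=
      mul_le_mul hb hvx hvpos.le hB0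
    refine le_trans step ?_
    rw [div_eq_mul_inv]
    have hq : (0:ℝ) < (1/2:ℝ)^m := by positivity
    have hBm1 : (0:ℝ) < B m + 1 := by linarith
    rw [show B m * ((1/2:ℝ)^m * (B m + 1)⁻¹) = (1/2)^m * (B m * (B m + 1)⁻¹) from by ring]
    have : B m * (B m + 1)⁻¹ ≤ 1 := by
      rw [mul_inv_le_iff₀ hBm1]
      linarith
    nlinarith

noncomputable def FF (n : ℕ) (x : ℝ) : ℝ := ∑ m ∈ Finset.range n, bF v M w N B g hA m x

noncomputable def fConstr (x : ℝ) : ℝ := FF v M w N B g hA (⌊max x 0⌋₊ + 1) x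

theorem FF_cont (hgc : ∀ k, Continuous (g k)) (n : ℕ) : Continuous (FF v M w N B g hA n) :=
  continuous_finset_sum _ (fun m _ => bF_cont v M w N B g hA hgc m)

include hN in
theorem fConstr_eq {x : ℝ} {n : ℕ} (hn : ⌊max x 0⌋₊ + 1 ≤ n) :
    fConstr v M w N B g hA x = FF v M w N B g hA n x := by
  rw [fConstr]
  set K := ⌊max x 0⌋₊ + 1 with hKdef
  have key := Finset.sum_Ico_consecutive (fun m => bF v M w N B g hA m x)
    (Nat.zero_le K) hn
  have hz : ∑ m ∈ Finset.Ico K n, bF v M w N B g hA m x = 0 := by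
    apply Finset.sum_eq_zero
    intro m hm
    apply bF_zero_left
    have hmK : K ≤ m := (Finset.mem_Ico.1 hm).1
    have h1 : max x 0 < (K:ℝ) := by
      rw [hKdef]
      push_cast
      exact Nat.lt_floor_add_one _
    have h2 : (K:ℝ) ≤ (m:ℝ) := Nat.cast_le.2 hmK
    have h3 := tau_ge v M w N B hA hN m
    have h4 : x ≤ max x 0 := le_max_left _ _
    linarith
  rw [FF, FF, Finset.range_eq_Ico, Finset.range_eq_Ico, ← key, hz, add_zero]

include hN in
theorem fConstr_cont (hgc : ∀ k, Continuous (g k)) : Continuous (fConstr v M w N B g hA) := by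
  rw [continuous_iff_continuousAt]
  intro x0
  set n0 := ⌊max x0 0⌋₊ + 2 with hn0def
  have hev : ∀ x ∈ Set.Iio (x0 + 1), fConstr v M w N B g hA x = FF v M w N B g hA n0 x := by
    intro x hx
    apply fConstr_eq v M w N B g hA hN
    have h1 : max x 0 ≤ max x0 0 + 1 := by
      simp only [Set.mem_Iio] at hx
      apply max_le
      · linarith [le_max_left x0 (0:ℝ)]
      · linarith [le_max_right x0 (0:ℝ)]
    have h2 : ⌊max x 0⌋₊ ≤ ⌊max x0 0 + 1⌋₊ := Nat.floor_le_floor h1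
    rw [Nat.floor_add_one (le_max_right x0 0)] at h2
    omega
  have hFc : ContinuousAt (FF v M w N B g hA n0) x0 := (FF_cont v M w N B g hA hgc n0).continuousAt
  apply hFc.congr
  filter_upwards [Iio_mem_nhds (lt_add_one x0)] with x hx
  exact (hev x hx).symm

theorem geom_tail (k n : ℕ) : ∑ m ∈ Finset.Ico k n, ((1:ℝ)/2)^m ≤ 2 * (1/2)^k := by
  rw [Finset.sum_Ico_eq_sum_range]
  have h1 : ∀ j ∈ Finset.range (n - k), ((1:ℝ)/2)^(k + j) = (1/2)^k * (1/2)^j :=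
    fun j _ => pow_add _ _ _
  rw [Finset.sum_congr rfl h1, ← Finset.mul_sum]
  have h2 := sum_geometric_two_le (n - k)
  have h3 : (0:ℝ) ≤ (1/2)^k := by positivity
  nlinarith

include hN hB in
theorem fConstr_tail (h : AW v M w) (hgz : ∀ k y, N k ≤ y → g k y = 0)
    (hgb : ∀ k y, |g k y| ≤ B k) (m0 : ℕ) {x : ℝ} (hx0 : 0 ≤ x)
    (hxge : tauSeq v M w N B hA m0 - 1 ≤ x) :
    |fConstr v M w N B g hA x| * v x ≤ 2 * (1/2)^m0 := by
  set K := ⌊max x 0⌋₊ + 1 with hKdef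
  have hm0K : m0 ≤ K := by
    have h1 := tau_ge v M w N B hA hN m0
    have h2 : x ≤ max x 0 := le_max_left _ _
    have h3 : max x 0 < (K:ℝ) := by rw [hKdef]; push_cast; exact Nat.lt_floor_add_one _
    have h4 : (m0:ℝ) < (K:ℝ) := by linarith
    exact_mod_cast h4.le
  have hsplit := Finset.sum_Ico_consecutive (fun m => bF v M w N B g hA m x)
    (Nat.zero_le m0) hm0K
  have hz : ∑ m ∈ Finset.Ico 0 m0, bF v M w N B g hA m x = 0 := by
    apply Finset.sum_eq_zero
    intro m hm
    apply bF_zero_right v M w N B g hA hgz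
    have hmlt : m < m0 := (Finset.mem_Ico.1 hm).2
    have := tau_chain v M w N B hA hN hmlt
    linarith
  have heq : fConstr v M w N B g hA x = ∑ m ∈ Finset.Ico m0 K, bF v M w N B g hA m x := by
    show FF v M w N B g hA K x = _
    rw [FF, Finset.range_eq_Ico, ← hsplit, hz, zero_add]
  rw [heq]
  have hvpos : 0 < v x := h.pos x hx0
  have e1 : |∑ m ∈ Finset.Ico m0 K, bF v M w N B g hA m x| * v x
      ≤ ∑ m ∈ Finset.Ico m0 K, |bF v M w N B g hA m x| * v x := by
    rw [← Finset.sum_mul]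
    exact mul_le_mul_of_nonneg_right (Finset.abs_sum_le_sum_abs _ _) hvpos.le
  have e2 : ∑ m ∈ Finset.Ico m0 K, |bF v M w N B g hA m x| * v x
      ≤ ∑ m ∈ Finset.Ico m0 K, ((1:ℝ)/2)^m := by
    apply Finset.sum_le_sum
    intro m _
    have := term_bound v M w N B g hA hN hB h hgz hgb m hx0 le_rfl
      (prevTau_nonneg v M w N B hA hN m)
    simpa using this
  calc |∑ m ∈ Finset.Ico m0 K, bF v M w N B g hA m x| * v x
      ≤ ∑ m ∈ Finset.Ico m0 K, ((1:ℝ)/2)^m := le_trans e1 e2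
    _ ≤ 2 * (1/2)^m0 := geom_tail _ _

end Construction

section Construction2

open Filter Set Finset

variable (v : ℝ → ℝ) (M w : ℝ) (N B : ℕ → ℝ) (g : ℕ → ℝ → ℝ)
variable (hA : ∀ η : ℝ, 0 < η → ∀ T : ℝ, ∃ s, T ≤ s ∧ v s < η)
variable (hN : ∀ k, 0 ≤ N k) (hB : ∀ k, 0 ≤ B k)

include hN hB in
theorem fConstr_tendsto (h : AW v M w) (hgz : ∀ k y, N k ≤ y → g k y = 0)
    (hgb : ∀ k y, |g k y| ≤ B k) :
    Tendsto (fun x => |fConstr v M w N B g hA x| * v x) atTop (nhds 0) := by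
  rw [Metric.tendsto_atTop]
  intro ε hε
  obtain ⟨m0, hm0⟩ := exists_pow_lt_of_lt_one (show (0:ℝ) < ε/2 by linarith)
    (by norm_num : (1/2:ℝ) < 1)
  refine ⟨max (tauSeq v M w N B hA m0) 0, fun x hx => ?_⟩
  have hx0 : 0 ≤ x := le_trans (le_max_right _ _) hx
  have hxge : tauSeq v M w N B hA m0 - 1 ≤ x := by
    have := le_trans (le_max_left (tauSeq v M w N B hA m0) 0) hx
    linarith
  have hb := fConstr_tail v M w N B g hA hN hB h hgz hgb m0 hx0 hxge
  rw [Real.dist_eq, sub_zero, abs_of_nonneg (mul_nonneg (abs_nonneg _) (h.pos x hx0).le)]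
  linarith

include hN hB in
theorem fConstr_approx (h : AW v M w) (hgz : ∀ k y, N k ≤ y → g k y = 0)
    (hgb : ∀ k y, |g k y| ≤ B k) (k : ℕ) {x : ℝ} (hx0 : 0 ≤ x) :
    |fConstr v M w N B g hA (x + tauSeq v M w N B hA k) - g k x| * v x ≤ (1/2)^k := by
  set t := tauSeq v M w N B hA k with htdef
  have ht0 : 0 ≤ t := tau_pos v M w N B hA hN k
  set y := x + t with hydef
  have hy0 : 0 ≤ y := by rw [hydef]; linarith
  set n := ⌊max y 0⌋₊ + 1 with hndef
  have hkn : k < n := by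
    have h1 := tau_ge v M w N B hA hN k
    have h2 : y ≤ max y 0 := le_max_left _ _
    have h3 : max y 0 < (n:ℝ) := by rw [hndef]; push_cast; exact Nat.lt_floor_add_one _
    have h4 : (k:ℝ) < (n:ℝ) := by
      have : t ≤ y := by rw [hydef]; linarith
      linarith
    exact_mod_cast h4
  have hk_mem : k ∈ Finset.range n := Finset.mem_range.2 hkn
  have hsplit := Finset.sum_erase_add (Finset.range n) (fun m => bF v M w N B g hA m y) hk_mem
  have hbk : bF v M w N B g hA k y = g k x := by
    rw [bF_eq v M w N B g hA (show tauSeq v M w N B hA k ≤ y by rw [hydef, ← htdef]; linarith)]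
    congr 1
    rw [hydef, ← htdef]; ring
  have hdiff : fConstr v M w N B g hA y - g k x
      = ∑ m ∈ (Finset.range n).erase k, bF v M w N B g hA m y := by
    have hsplit' : (∑ m ∈ (Finset.range n).erase k, bF v M w N B g hA m y)
        + bF v M w N B g hA k y = FF v M w N B g hA n y := hsplit
    have h5 : FF v M w N B g hA n y
        = (∑ m ∈ (Finset.range n).erase k, bF v M w N B g hA m y) + g k x := by
      rw [← hsplit', hbk]
    have h6 : fConstr v M w N B g hA y = FF v M w N B g hA n y := rfl
    rw [h6, h5]; ring
  rw [hdiff]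
  have hvpos : 0 < v x := h.pos x hx0
  have e1 : |∑ m ∈ (Finset.range n).erase k, bF v M w N B g hA m y| * v x
      ≤ ∑ m ∈ (Finset.range n).erase k, |bF v M w N B g hA m y| * v x := by
    rw [← Finset.sum_mul]
    exact mul_le_mul_of_nonneg_right (Finset.abs_sum_le_sum_abs _ _) hvpos.le
  have e2 : ∑ m ∈ (Finset.range n).erase k, |bF v M w N B g hA m y| * v x
      ≤ ∑ m ∈ (Finset.range n).erase k, (if k < m then ((1:ℝ)/2)^m else 0) := by
    apply Finset.sum_le_sum
    intro m hm
    have hmne : m ≠ k := Finset.ne_of_mem_erase hm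
    rcases Nat.lt_or_ge m k with hmk | hmk
    · have hz : bF v M w N B g hA m y = 0 := by
        apply bF_zero_right v M w N B g hA hgz
        have := tau_chain v M w N B hA hN hmk
        rw [hydef]
        linarith [htdef]
      rw [hz]
      simp only [abs_zero, zero_mul]
      split <;> positivity
    · have hkm : k < m := lt_of_le_of_ne hmk (Ne.symm hmne)
      rw [if_pos hkm]
      obtain ⟨m', rfl⟩ : ∃ m', m = m' + 1 := ⟨m - 1, by omega⟩
      have hsle : t ≤ prevTau v M w N B hA (m' + 1) := by
        show t ≤ tauSeq v M w N B hA m'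
        rw [htdef]
        exact tau_mono v M w N B hA hN (by omega)
      have := term_bound v M w N B g hA hN hB h hgz hgb (m' + 1) hx0 ht0 hsle
      rw [hydef]
      exact this
  have e3 : ∑ m ∈ (Finset.range n).erase k, (if k < m then ((1:ℝ)/2)^m else 0)
      ≤ ∑ m ∈ Finset.range n, (if k < m then ((1:ℝ)/2)^m else 0) := by
    apply Finset.sum_le_sum_of_subset_of_nonneg (Finset.erase_subset _ _)
    intro i _ _
    split <;> positivity
  have e4 : ∑ m ∈ Finset.range n, (if k < m then ((1:ℝ)/2)^m else 0)
      = ∑ m ∈ Finset.Ico (k+1) n, ((1:ℝ)/2)^m := by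
    rw [Finset.range_eq_Ico, ← Finset.sum_Ico_consecutive
      (fun m => if k < m then ((1:ℝ)/2)^m else 0) (Nat.zero_le (k+1)) hkn]
    have hz1 : ∑ m ∈ Finset.Ico 0 (k+1), (if k < m then ((1:ℝ)/2)^m else 0) = 0 := by
      apply Finset.sum_eq_zero
      intro m hm
      have := (Finset.mem_Ico.1 hm).2
      rw [if_neg (by omega)]
    have hz2 : ∑ m ∈ Finset.Ico (k+1) n, (if k < m then ((1:ℝ)/2)^m else 0)
        = ∑ m ∈ Finset.Ico (k+1) n, ((1:ℝ)/2)^m := by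
      apply Finset.sum_congr rfl
      intro m hm
      have := (Finset.mem_Ico.1 hm).1
      rw [if_pos (by omega)]
    rw [hz1, hz2, zero_add]
  have e5 : ∑ m ∈ Finset.Ico (k+1) n, ((1:ℝ)/2)^m ≤ (1/2)^k := by
    have := geom_tail (k+1) n
    have h7 : 2 * ((1:ℝ)/2)^(k+1) = (1/2)^k := by
      rw [pow_succ]; ring
    linarith
  linarith

include hA hN hB in
theorem constructionMain (h : AW v M w) (hgc : ∀ k, Continuous (g k))
    (hgz : ∀ k y, N k ≤ y → g k y = 0) (hgb : ∀ k y, |g k y| ≤ B k) :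
    ∃ f, MemC0 v f ∧ ∀ k : ℕ, ∃ t, 0 ≤ t ∧
      ∀ x, 0 ≤ x → |f (x + t) - g k x| * v x ≤ (1/2)^k := by
  refine ⟨fConstr v M w N B g hA,
    ⟨(fConstr_cont v M w N B g hA hN hgc).continuousOn,
      fConstr_tendsto v M w N B g hA hN hB h hgz hgb⟩,
    fun k => ⟨tauSeq v M w N B hA k, tau_pos v M w N B hA hN k,
      fun x hx0 => fConstr_approx v M w N B g hA hN hB h hgz hgb k hx0⟩⟩

end Construction2

section Backward

open Filter Set

theorem backward_dir {v : ℝ → ℝ} {M w : ℝ} (h : AW v M w)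
    (hex : ∃ f, MemC0 v f ∧ ∃ a > (0:ℝ),
      ¬ Filter.Tendsto
        (fun t => sSup ((fun x => |f (x + t)| * v x) '' Set.Icc (0:ℝ) a))
        Filter.atTop (nhds 0)) :
    ∃ f, MemC0 v f ∧ ∀ g, MemC0 v g → ∀ ε > (0:ℝ), ∃ t, 0 ≤ t ∧
      c0Norm v (translateW t f - g) < ε := by
  obtain ⟨f0, hf0, a, ha, hnt⟩ := hex
  have hA := small_points h hf0 ha hnt
  obtain ⟨f, hfC0, happrox⟩ := constructionMain v M w Nseq Bseq gseq hA
    Nseq_nonneg Bseq_nonneg h gseq_cont (fun k y hy => gseq_zero k hy)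
    (fun k y => gseq_bound k y)
  refine ⟨f, hfC0, ?_⟩
  intro G hG ε hε
  obtain ⟨K, hK⟩ := exists_pow_lt_of_lt_one (half_pos hε) (by norm_num : (1/2:ℝ) < 1)
  obtain ⟨k, hkK, hknorm⟩ := gseq_dense h hG (ε/2) (half_pos hε) K
  obtain ⟨t, ht0, hterr⟩ := happrox k
  refine ⟨t, ht0, ?_⟩
  have hcont : ContinuousOn (gseq k - G) (Set.Ici (0:ℝ)) :=
    ((gseq_cont k).continuousOn).sub hG.1
  have htend : Tendsto (fun x => |(gseq k - G) x| * v x) atTop (nhds 0) := by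
    have key : Tendsto (fun x => |gseq k x| * v x + |G x| * v x) atTop (nhds 0) := by
      have h1 : Tendsto (fun x => |gseq k x| * v x) atTop (nhds 0) := by
        apply Tendsto.congr' _ (tendsto_const_nhds (α := ℝ))
        filter_upwards [eventually_ge_atTop (Nseq k)] with x hx
        rw [gseq_zero k hx]
        simp
      have := h1.add hG.2
      simpa using this
    apply squeeze_zero' ?_ ?_ key
    · filter_upwards [eventually_ge_atTop (0:ℝ)] with x hx
      have := h.pos x hx
      positivity
    · filter_upwards [eventually_ge_atTop (0:ℝ)] with x hx
      have h4 : 0 ≤ v x := (h.pos x hx).le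
      have h5 : |(gseq k - G) x| ≤ |gseq k x| + |G x| := by
        simp only [Pi.sub_apply]
        exact abs_sub _ _
      nlinarith [abs_nonneg (gseq k x), abs_nonneg (G x)]
  have hb := bddAbove_c0_image h hcont htend
  have hle : ∀ x, 0 ≤ x → |(translateW t f - G) x| * v x
      ≤ (1/2)^k + c0Norm v (gseq k - G) := by
    intro x hx
    have e1 : |(translateW t f - G) x| ≤ |f (x + t) - gseq k x| + |(gseq k - G) x| := by
      simp only [Pi.sub_apply, translateW]
      have : f (x + t) - G x = (f (x + t) - gseq k x) + (gseq k x - G x) := by ring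
      rw [this]
      exact abs_add_le _ _
    have e2 := hterr x hx
    have e3 : |(gseq k - G) x| * v x ≤ c0Norm v (gseq k - G) := le_c0Norm hb hx
    have h4 : 0 ≤ v x := (h.pos x hx).le
    nlinarith [abs_nonneg ((gseq k - G) x), abs_nonneg (f (x + t) - gseq k x)]
  have hfin := c0Norm_le hle
  have hpow : (1/2:ℝ)^k ≤ (1/2)^K := pow_le_pow_of_le_one (by norm_num) (by norm_num) hkK
  linarith

end Backward

theorem c0_hypercyclic_iff_not_tendsto_zero_on_interval
    (v : ℝ → ℝ) (hv : AdmissibleWeight v) :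
    (∃ f, MemC0 v f ∧ ∀ g, MemC0 v g → ∀ ε > (0:ℝ), ∃ t, 0 ≤ t ∧
        c0Norm v (translateW t f - g) < ε) ↔
      (∃ f, MemC0 v f ∧ ∃ a > (0:ℝ),
        ¬ Filter.Tendsto
          (fun t => sSup ((fun x => |f (x + t)| * v x) '' Set.Icc (0:ℝ) a))
          Filter.atTop (nhds 0)) := by
  obtain ⟨M, w, h⟩ := AW.of_adm hv
  constructor
  · rintro ⟨f, hf, hyp⟩
    exact ⟨f, hf, 1, one_pos, forward_dir h hf hyp⟩
  · exact backward_dir h
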